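/- arXiv:2101.00682 — 6 statements merged into one kernel-verified Lean document; each statement's English description precedes it below -/
import Mathlib

section
/- Suppose Γ is a group acting on the hyperbolic plane ℍ by isometries with infimum displacement strictly greater than 45, i.e., dist(γ • z, z) > 45 for every z ∈ ℍ and every γ ≠ 1. Then for any field k the group algebra kΓ has no zero divisors: if a ≠ 0 and x ≠ 0 in kΓ, then a·x ≠ 0. -/
open scoped UpperHalfPlane

section DelzantAux

open scoped MatrixGroups
open UpperHalfPlane Real

namespace DelzantAux


noncomputable def Sfn (z w : ℍ) : ℝ := dist (z : ℂ) (w : ℂ) ^ 2 / (z.im * w.im)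

lemma Sfn_eq (z w : ℍ) : Sfn z w = exp (dist z w) + exp (-dist z w) - 2 := by
  have h := UpperHalfPlane.cosh_dist z w
  have h2 : Real.cosh (dist z w) = (exp (dist z w) + exp (-dist z w)) / 2 := Real.cosh_eq _
  have hz := z.im_pos
  have hw := w.im_pos
  rw [h2] at h
  unfold Sfn
  field_simp at h ⊢
  linarith

lemma Sfn_le (z w : ℍ) : Sfn z w ≤ exp (dist z w) := by
  rw [Sfn_eq]
  have : exp (-dist z w) ≤ 1 := by
    rw [← Real.exp_zero]
    exact Real.exp_le_exp.2 (neg_nonpos.2 dist_nonneg)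
  linarith

lemma le_Sfn (z w : ℍ) (h : 2 ≤ dist z w) : exp (dist z w) ≤ 2 * Sfn z w := by
  rw [Sfn_eq]
  have h4 : 4 ≤ exp (dist z w) := by
    calc (4:ℝ) = 2 * 2 := by norm_num
    _ ≤ exp 1 * exp 1 := by
        have := Real.add_one_le_exp (1:ℝ)
        nlinarith [Real.exp_pos (1:ℝ)]
    _ = exp 2 := by rw [← Real.exp_add]; norm_num
    _ ≤ exp (dist z w) := Real.exp_le_exp.2 h
  have : 0 < exp (-dist z w) := Real.exp_pos _
  linarith

lemma Sfn_nonneg (z w : ℍ) : 0 ≤ Sfn z w := by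
  unfold Sfn
  have hz := z.im_pos
  have hw := w.im_pos
  positivity

lemma hyp4 (z₁ z₂ z₃ z₄ : ℍ) :
    dist z₁ z₂ + dist z₃ z₄ ≤ max (dist z₁ z₃ + dist z₂ z₄) (dist z₁ z₄ + dist z₂ z₃) + 10 := by
  rcases le_or_gt (dist z₁ z₂) 2 with h12 | h12
  · have t1 : dist z₃ z₄ ≤ dist z₃ z₂ + dist z₂ z₁ + dist z₁ z₄ := dist_triangle4 _ _ _ _
    have : dist z₁ z₂ + dist z₃ z₄ ≤ dist z₁ z₄ + dist z₂ z₃ + 10 := by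
      rw [dist_comm z₃ z₂, dist_comm z₂ z₁] at t1; linarith
    exact this.trans (by gcongr; exact le_max_right _ _)
  rcases le_or_gt (dist z₃ z₄) 2 with h34 | h34
  · have t1 : dist z₁ z₂ ≤ dist z₁ z₃ + dist z₃ z₄ + dist z₄ z₂ := dist_triangle4 _ _ _ _
    have : dist z₁ z₂ + dist z₃ z₄ ≤ dist z₁ z₃ + dist z₂ z₄ + 10 := by
      rw [dist_comm z₄ z₂] at t1; linarith
    exact this.trans (by gcongr; exact le_max_left _ _)
  -- main case
  set M := max (dist z₁ z₃ + dist z₂ z₄) (dist z₁ z₄ + dist z₂ z₃) with hM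
  have key : exp (dist z₁ z₂ + dist z₃ z₄) ≤ 16 * exp M := by
    have hpt : dist (z₁ : ℂ) (z₂ : ℂ) * dist (z₃ : ℂ) (z₄ : ℂ) ≤
        dist (z₁ : ℂ) (z₃ : ℂ) * dist (z₂ : ℂ) (z₄ : ℂ) +
        dist (z₁ : ℂ) (z₄ : ℂ) * dist (z₂ : ℂ) (z₃ : ℂ) := by
      have := EuclideanGeometry.mul_dist_le_mul_dist_add_mul_dist (z₁ : ℂ) (z₃ : ℂ) (z₂ : ℂ) (z₄ : ℂ)
      rw [dist_comm (z₃ : ℂ) (z₂ : ℂ)] at this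
      linarith
    have h1 := z₁.im_pos; have h2 := z₂.im_pos; have h3 := z₃.im_pos; have h4 := z₄.im_pos
    have hS : Sfn z₁ z₂ * Sfn z₃ z₄ ≤ 2 * (Sfn z₁ z₃ * Sfn z₂ z₄ + Sfn z₁ z₄ * Sfn z₂ z₃) := by
      unfold Sfn
      rw [div_mul_div_comm, div_mul_div_comm, div_mul_div_comm]
      rw [div_le_iff₀ (by positivity)]
      have expand : (2:ℝ) * (dist (z₁:ℂ) z₃ ^ 2 * dist (z₂:ℂ) z₄ ^ 2 / (z₁.im * z₃.im * (z₂.im * z₄.im)) +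
          dist (z₁:ℂ) z₄ ^ 2 * dist (z₂:ℂ) z₃ ^ 2 / (z₁.im * z₄.im * (z₂.im * z₃.im))) *
          (z₁.im * z₂.im * (z₃.im * z₄.im)) =
          2 * (dist (z₁:ℂ) z₃ ^ 2 * dist (z₂:ℂ) z₄ ^ 2 + dist (z₁:ℂ) z₄ ^ 2 * dist (z₂:ℂ) z₃ ^ 2) := by
        field_simp
      rw [expand]
      have hpt2 : (dist (z₁:ℂ) z₂ * dist (z₃:ℂ) z₄) ^ 2 ≤
          (dist (z₁:ℂ) z₃ * dist (z₂:ℂ) z₄ + dist (z₁:ℂ) z₄ * dist (z₂:ℂ) z₃) ^ 2 := by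
        apply pow_le_pow_left₀ (by positivity) hpt
      nlinarith [sq_nonneg (dist (z₁:ℂ) z₃ * dist (z₂:ℂ) z₄ - dist (z₁:ℂ) z₄ * dist (z₂:ℂ) z₃)]
    have hb1 : Sfn z₁ z₃ * Sfn z₂ z₄ ≤ exp (dist z₁ z₃ + dist z₂ z₄) := by
      rw [Real.exp_add]
      exact mul_le_mul (Sfn_le _ _) (Sfn_le _ _) (Sfn_nonneg _ _) (Real.exp_pos _).le
    have hb2 : Sfn z₁ z₄ * Sfn z₂ z₃ ≤ exp (dist z₁ z₄ + dist z₂ z₃) := by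
      rw [Real.exp_add]
      exact mul_le_mul (Sfn_le _ _) (Sfn_le _ _) (Sfn_nonneg _ _) (Real.exp_pos _).le
    have hmax1 : exp (dist z₁ z₃ + dist z₂ z₄) ≤ exp M := Real.exp_le_exp.2 (le_max_left _ _)
    have hmax2 : exp (dist z₁ z₄ + dist z₂ z₃) ≤ exp M := Real.exp_le_exp.2 (le_max_right _ _)
    have hl : exp (dist z₁ z₂ + dist z₃ z₄) ≤ 4 * (Sfn z₁ z₂ * Sfn z₃ z₄) := by
      rw [Real.exp_add]
      have e1 := le_Sfn z₁ z₂ h12.le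
      have e2 := le_Sfn z₃ z₄ h34.le
      nlinarith [Real.exp_pos (dist z₁ z₂), Real.exp_pos (dist z₃ z₄), Sfn_nonneg z₁ z₂, Sfn_nonneg z₃ z₄]
    linarith
  have h16 : (16:ℝ) ≤ exp 10 := by
    have h5 : (6:ℝ) ≤ exp 5 := by linarith [Real.add_one_le_exp (5:ℝ)]
    calc (16:ℝ) ≤ 6 * 6 := by norm_num
    _ ≤ exp 5 * exp 5 := by nlinarith [Real.exp_pos (5:ℝ)]
    _ = exp 10 := by rw [← Real.exp_add]; norm_num
  have : exp (dist z₁ z₂ + dist z₃ z₄) ≤ exp (M + 10) := by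
    rw [Real.exp_add M 10]
    calc exp (dist z₁ z₂ + dist z₃ z₄) ≤ 16 * exp M := key
    _ ≤ exp 10 * exp M := by nlinarith [Real.exp_pos M]
    _ = exp M * exp 10 := by ring
  exact Real.exp_le_exp.1 this


lemma isometry_S : Isometry (fun z : ℍ => ModularGroup.S • z) :=
  Isometry.of_dist_eq fun y₁ y₂ => by
    have h₁ : 0 ≤ im y₁ * im y₂ := by positivity
    have h₂ : ‖(y₁ * y₂ : ℂ)‖ ≠ 0 := by simp [y₁.ne_zero, y₂.ne_zero]
    simp_rw [modular_S_smul, inv_neg, UpperHalfPlane.dist_eq, dist_neg_neg,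
      dist_inv_inv₀ y₁.ne_zero y₂.ne_zero, mk_im, Complex.neg_im, Complex.inv_im, coe_im, neg_div,
      neg_neg, div_mul_div_comm, ← Complex.normSq_mul, Real.sqrt_div h₁, ← Complex.norm_def,
      mul_div (2 : ℝ)]
    rw [div_div_div_comm, ← norm_mul, div_self h₂, div_one]

lemma S_re (z : ℍ) : (ModularGroup.S • z).re = -z.re / Complex.normSq (z : ℂ) := by
  rw [modular_S_smul, mk_re, Complex.inv_re, Complex.neg_re, Complex.normSq_neg, coe_re]

/-- there are maps φ, ψ : ℍ → ℍ with φ an isometry, φ ∘ ψ = id,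
and φ maps z, w to a common vertical line. -/
lemma exists_phi (z w : ℍ) : ∃ φ ψ : ℍ → ℍ,
    (∀ a b : ℍ, dist (φ a) (φ b) = dist a b) ∧ (∀ y, φ (ψ y) = y) ∧ (φ z).re = (φ w).re := by
  rcases eq_or_ne z.re w.re with h | h
  · exact ⟨id, id, fun _ _ => rfl, fun _ => rfl, h⟩
  · set c : ℝ := (Complex.normSq (z:ℂ) - Complex.normSq (w:ℂ)) / (2 * (z.re - w.re)) with hc
    have hzw : z.re - w.re ≠ 0 := sub_ne_zero.2 h
    set r2 : ℝ := (z.re - c)^2 + z.im^2 with hr2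
    have hr2w : (w.re - c)^2 + w.im^2 = r2 := by
      have : c * (2 * (z.re - w.re)) = Complex.normSq (z:ℂ) - Complex.normSq (w:ℂ) := by
        rw [hc]; field_simp
      have hz : Complex.normSq (z:ℂ) = z.re^2 + z.im^2 := by
        rw [Complex.normSq_apply]; simp [coe_re, coe_im]; ring
      have hw : Complex.normSq (w:ℂ) = w.re^2 + w.im^2 := by
        rw [Complex.normSq_apply]; simp [coe_re, coe_im]; ring
      rw [hz, hw] at this
      nlinarith [this]
    have hr2pos : 0 < r2 := by have := z.im_pos; nlinarith
    set r : ℝ := Real.sqrt r2 with hr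
    have hrpos : 0 < r := Real.sqrt_pos.2 hr2pos
    have hrsq : r^2 = r2 := Real.sq_sqrt hr2pos.le
    set a : ℝ := r - c with ha
    set φ : ℍ → ℍ := fun y => ModularGroup.S • (a +ᵥ y) with hφ
    set ψ : ℍ → ℍ := fun y => (-a) +ᵥ ((ModularGroup.S)⁻¹ • y) with hψ
    refine ⟨φ, ψ, ?_, ?_, ?_⟩
    · intro p q
      rw [hφ]
      simp only []
      rw [isometry_S.dist_eq, (isometry_real_vadd a).dist_eq]
    · intro y
      rw [hφ, hψ]
      simp only []
      rw [vadd_vadd, add_neg_cancel, zero_vadd, smul_inv_smul]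
    · -- re computation
      have key : ∀ y : ℍ, (y.re - c)^2 + y.im^2 = r2 → (φ y).re = -1 / (2*r) := by
        intro y hy
        rw [hφ]
        simp only []
        rw [S_re]
        have hre : (a +ᵥ y).re = y.re + r - c := by rw [vadd_re]; ring
        have him : (a +ᵥ y).im = y.im := vadd_im a y
        have hns : Complex.normSq ((a +ᵥ y : ℍ) : ℂ) = (y.re + r - c)^2 + y.im^2 := by
          rw [Complex.normSq_apply]
          rw [show (((a +ᵥ y : ℍ)) : ℂ).re = (a +ᵥ y).re from rfl,
              show (((a +ᵥ y : ℍ)) : ℂ).im = (a +ᵥ y).im from rfl, hre, him]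
          ring
      -- (y.re + r - c) > 0 since |y.re - c| < r
        have hyim := y.im_pos
        have habs : (y.re - c)^2 < r^2 := by rw [hrsq]; nlinarith
        have hpos : 0 < y.re + r - c := by nlinarith [habs, hrpos, sq_nonneg (y.re - c + r)]
        rw [hre, hns]
        have hexp : (y.re + r - c)^2 + y.im^2 = 2*r*(y.re + r - c) := by
          have : (y.re - c)^2 + y.im^2 = r^2 := by rw [hrsq]; exact hy
          nlinarith [this]
        rw [hexp]
        field_simp
      rw [key z rfl, key w hr2w]

/-- Two points on a geodesic from z to w at parameters t and u. -/
lemma exists_two_points (z w : ℍ) (t u : ℝ) (h0 : 0 ≤ t) (htu : t ≤ u) (hu : u ≤ dist z w) :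
    ∃ x x' : ℍ, dist z x = t ∧ dist x w = dist z w - t ∧ dist z x' = u ∧
      dist x' w = dist z w - u ∧ dist x x' = u - t := by
  obtain ⟨φ, ψ, hiso, hinv, hre⟩ := exists_phi z w
  set z' := φ z with hz'
  set w' := φ w with hw'
  have hd : dist z' w' = dist z w := hiso z w
  rcases eq_or_lt_of_le (h0.trans (htu.trans hu)) with hL | hL
  · -- dist z w = 0 : z = w? no, 0 = dist z w means t = u = 0
    have ht0 : t = 0 := le_antisymm (htu.trans (hu.trans hL.symm.le)) h0
    have hu0 : u = 0 := le_antisymm (hu.trans hL.symm.le) (h0.trans htu)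
    refine ⟨z, z, by simp [ht0], by rw [ht0, sub_zero], by simp [hu0], by rw [hu0, sub_zero], by simp [ht0, hu0]⟩
  -- main case 0 < dist z w
  have hL' : 0 < dist z' w' := hd ▸ hL
  set A := z'.re with hA
  set p : ℝ := Real.log z'.im with hp
  set q : ℝ := Real.log w'.im with hq
  have hdist' : dist z' w' = dist p q := UpperHalfPlane.dist_of_re_eq hre
  set s : ℝ := (q - p) / dist z w with hs
  have hqp : q - p = s * dist z w := by rw [hs]; field_simp
  have habs : |s| = 1 := by
    have : |q - p| = dist z w := by rw [← Real.dist_eq, dist_comm q p, ← hdist', hd]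
    rw [hs, abs_div, this, abs_of_pos hL, div_self hL.ne']
  -- the point at parameter v
  have mkpt : ∀ v : ℝ, 0 ≤ v → v ≤ dist z w → ∃ x : ℍ,
      dist z x = v ∧ dist x w = dist z w - v ∧ (φ x).re = A ∧ Real.log (φ x).im = p + v * s := by
    intro v hv0 hv1
    set y : ℍ := UpperHalfPlane.mk ⟨A, Real.exp (p + v * s)⟩ (Real.exp_pos _) with hy
    refine ⟨ψ y, ?_, ?_, ?_, ?_⟩
    · have : dist z (ψ y) = dist z' y := by rw [← hiso z (ψ y), hinv y]
      rw [this, UpperHalfPlane.dist_of_re_eq (by simp [hy, hA]), hy]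
      simp only [UpperHalfPlane.mk_im]
      rw [Real.log_exp, ← hp, Real.dist_eq]
      have : |(-(v*s))| = v := by
        rw [abs_neg, abs_mul, habs, mul_one, abs_of_nonneg hv0]
      rw [show p - (p + v*s) = -(v*s) by ring, this]
    · have : dist (ψ y) w = dist y w' := by rw [← hiso (ψ y) w, hinv y]
      rw [this, UpperHalfPlane.dist_of_re_eq (by simp [hy, hA, hre.symm]), hy]
      simp only [UpperHalfPlane.mk_im]
      rw [Real.log_exp, ← hq, Real.dist_eq]
      have h1 : p + v * s - q = (v - dist z w) * s := by linear_combination -hqp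
      rw [h1, abs_mul, habs, mul_one, abs_of_nonpos (by linarith)]
      ring
    · rw [hinv y, hy]; simp
    · rw [hinv y, hy]; simp
  obtain ⟨x, hx1, hx2, hx3, hx4⟩ := mkpt t h0 (htu.trans hu)
  obtain ⟨x', hx1', hx2', hx3', hx4'⟩ := mkpt u (h0.trans htu) hu
  refine ⟨x, x', hx1, hx2, hx1', hx2', ?_⟩
  have : dist x x' = dist (φ x) (φ x') := (hiso x x').symm
  rw [this, UpperHalfPlane.dist_of_re_eq (by rw [hx3, hx3']), hx4, hx4', Real.dist_eq]
  rw [show p + t*s - (p + u*s) = -((u - t) * s) by ring, abs_neg, abs_mul, habs, mul_one,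
    abs_of_nonneg (by linarith)]

end DelzantAux

end DelzantAux

/-- Delzant's theorem for the hyperbolic plane: the group algebra of a group acting by
isometries on `ℍ` with infimum displacement greater than `45` has no zero divisors. -/
theorem no_zero_divisors_of_displacement {Γ : Type*} [Group Γ] [MulAction Γ ℍ]
    (isom : ∀ (γ : Γ) (z w : ℍ), dist (γ • z) (γ • w) = dist z w)
    (disp : ∀ (γ : Γ) (z : ℍ), γ ≠ 1 → 45 < dist (γ • z) z)
    (k : Type*) [Field k]
    (a x : MonoidAlgebra k Γ) (ha : a ≠ 0) (hx : x ≠ 0) :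
    a * x ≠ 0 := by
  haveI : UniqueProds Γ := by
    constructor
    intro A B hA hB
    set o : ℍ := UpperHalfPlane.I with ho
    obtain ⟨p, hp, hmax⟩ := Finset.exists_max_image (A ×ˢ B)
      (fun p : Γ × Γ => dist ((p.1 * p.2) • o) o) (hA.product hB)
    rw [Finset.mem_product] at hp
    refine ⟨p.1, hp.1, p.2, hp.2, ?_⟩
    intro A' B' hA' hB' heq
    -- A' B' are elements a b with a ∈ A, b ∈ B, a*b = p.1*p.2
    have key : A' = p.1 := by
      by_contra hne
      set g : Γ := A' * p.1⁻¹ with hg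
      have hg1 : g ≠ 1 := by
        intro hcon
        exact hne (by rwa [hg, mul_inv_eq_one] at hcon)
      set q : ℍ := (p.1 * p.2) • o with hq
      set T : ℝ := dist (g • o) o with hT
      have hT45 : 45 < T := disp g o hg1
      set M : ℝ := dist ((p.1 * p.2) • o) o with hM
      -- dist (g • o) q = dist ((p.1 * B') • o) o ≤ M
      have h1 : dist (g • o) q ≤ M := by
        have e1 : dist (g • o) q = dist ((p.1 * A'⁻¹) • (g • o)) ((p.1 * A'⁻¹) • q) :=
          (isom (p.1 * A'⁻¹) _ _).symm
        have e2 : (p.1 * A'⁻¹) • (g • o) = o := by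
          rw [← mul_smul, hg]
          have : p.1 * A'⁻¹ * (A' * p.1⁻¹) = 1 := by group
          rw [this, one_smul]
        have e3 : (p.1 * A'⁻¹) • q = (p.1 * B') • o := by
          rw [hq, ← mul_smul, ← heq]
          congr 1
          group
        rw [e1, e2, e3, dist_comm]
        exact hmax (p.1, B') (Finset.mem_product.2 ⟨hp.1, hB'⟩)
      have h2 : dist (g⁻¹ • o) q ≤ M := by
        have e1 : dist (g⁻¹ • o) q = dist ((A' * p.1⁻¹) • (g⁻¹ • o)) ((A' * p.1⁻¹) • q) :=
          (isom (A' * p.1⁻¹) _ _).symm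
        have e2 : (A' * p.1⁻¹) • (g⁻¹ • o) = o := by
          rw [← mul_smul, hg]
          have : A' * p.1⁻¹ * (A' * p.1⁻¹)⁻¹ = 1 := by group
          rw [this, one_smul]
        have e3 : (A' * p.1⁻¹) • q = (A' * p.2) • o := by
          rw [hq, ← mul_smul]
          congr 1
          group
        rw [e1, e2, e3, dist_comm]
        exact hmax (A', p.2) (Finset.mem_product.2 ⟨hA', hp.2⟩)
      have hTinv : dist (g⁻¹ • o) o = T := by
        have := isom g (g⁻¹ • o) o
        rw [smul_inv_smul] at this
        rw [← this, dist_comm, hT]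
      -- Step A : D ≤ T + 10
      have hD : dist (g • o) (g⁻¹ • o) ≤ T + 10 := by
        have h4 := DelzantAux.hyp4 (g • o) (g⁻¹ • o) q o
        have hqo : dist q o = M := hM
        have : max (dist (g • o) q + dist (g⁻¹ • o) o) (dist (g • o) o + dist (g⁻¹ • o) q)
            ≤ T + M := max_le (by rw [hTinv]; linarith) (by rw [← hT]; linarith)
        linarith [h4, this, hqo.symm ▸ h4]
      -- Step B : geodesic points
      have hTo : dist o (g • o) = T := by rw [dist_comm, hT]
      obtain ⟨X, X', hX1, hX2, hX1', hX2', hXX'⟩ :=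
        DelzantAux.exists_two_points o (g • o) (T/2 - 10) (T/2 + 10) (by linarith) (by linarith)
          (by rw [hTo]; linarith)
      rw [hTo] at hX2 hX2'
      -- C1
      have hC1 : dist X (g⁻¹ • o) ≤ T/2 + 20 := by
        have h4 := DelzantAux.hyp4 X (g⁻¹ • o) (g • o) o
        have : max (dist X (g • o) + dist (g⁻¹ • o) o) (dist X o + dist (g⁻¹ • o) (g • o))
            ≤ 3*T/2 + 10 := by
          apply max_le
          · rw [hX2, hTinv]; linarith
          · rw [dist_comm X o, hX1, dist_comm (g⁻¹ • o) (g • o)]; linarith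
        rw [← hT] at h4
        linarith
      -- y := g⁻¹ • X'
      set y : ℍ := g⁻¹ • X' with hy
      have hgy : g • y = X' := by rw [hy, smul_inv_smul]
      have hyo : dist y o = T/2 - 10 := by
        have := isom g y o
        rw [hgy] at this
        rw [← this, hX2']
        linarith
      have hyg : dist y (g⁻¹ • o) = T/2 + 10 := by
        have := isom g y (g⁻¹ • o)
        rw [hgy, smul_inv_smul] at this
        rw [← this, dist_comm, hX1']
      -- C2
      have hC2 : dist X y ≤ 20 := by
        have h4 := DelzantAux.hyp4 X y (g⁻¹ • o) o
        have : max (dist X (g⁻¹ • o) + dist y o) (dist X o + dist y (g⁻¹ • o)) ≤ T + 10 := by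
          apply max_le
          · rw [hyo]; linarith
          · rw [dist_comm X o, hX1, hyg]; linarith
        rw [hTinv] at h4
        linarith
      -- final contradiction
      have hfin := disp g X hg1
      have : dist (g • X) X ≤ 40 := by
        have e1 : dist (g • X) X' = dist X y := by
          rw [← hgy, isom g X y]
        calc dist (g • X) X ≤ dist (g • X) X' + dist X' X := dist_triangle _ _ _
        _ = dist X y + dist X X' := by rw [e1, dist_comm X' X]
        _ ≤ 40 := by rw [hXX']; linarith
      linarith
    refine ⟨key, ?_⟩
    have := heq
    rw [key] at this
    exact mul_left_cancel this
  exact mul_ne_zero ha hx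
end

section
/- For all points o, p, q, m in the hyperbolic plane ℍ, if m is a midpoint of p and q, then max(dist(o,p), dist(o,q)) ≥ dist(o,m) + dist(p,q)/2 − 5. -/
open scoped UpperHalfPlane
open Real

lemma median_alg (p1 p2 q1 q2 m1 m2 x y k : ℝ) (hp2 : 0 < p2) (hq2 : 0 < q2)
    (hm2 : 0 < m2) (hy : 0 < y)
    (hC1 : (p1-m1)^2+(p2-m2)^2 = 2*p2*m2*(k-1))
    (hC2 : (q1-m1)^2+(q2-m2)^2 = 2*q2*m2*(k-1))
    (hC3 : (p1-q1)^2+(p2-q2)^2 = 4*p2*q2*(k^2-1)) :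
    (1 + ((x-p1)^2+(y-p2)^2)/(2*y*p2)) + (1 + ((x-q1)^2+(y-q2)^2)/(2*y*q2))
      = 2*k*(1 + ((x-m1)^2+(y-m2)^2)/(2*y*m2)) := by
  have h0 : (q2*(m1-p1) - p2*(q1-m1))^2 + (q2*(m2-p2*k) - p2*(q2*k-m2))^2 = 0 := by
    linear_combination (q2^2+p2*q2)*hC1 + (p2^2+p2*q2)*hC2 - p2*q2*hC3
  have h1 : q2*(m1-p1) - p2*(q1-m1) = 0 := by
    nlinarith [sq_nonneg (q2*(m1-p1) - p2*(q1-m1)), sq_nonneg (q2*(m2-p2*k) - p2*(q2*k-m2))]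
  have h2 : q2*(m2-p2*k) - p2*(q2*k-m2) = 0 := by
    nlinarith [sq_nonneg (q2*(m1-p1) - p2*(q1-m1)), sq_nonneg (q2*(m2-p2*k) - p2*(q2*k-m2))]
  have hS : (0:ℝ) < p2 + q2 := by linarith
  have hT : (p2+q2) * (q2*m2*((x-p1)^2+(y-p2)^2) + p2*m2*((x-q1)^2+(y-q2)^2)
      + 4*y*p2*q2*m2 - (4*k*y*p2*q2*m2 + 2*k*p2*q2*((x-m1)^2+(y-m2)^2))) = 0 := by
    linear_combination (((x^2+y^2) + m1^2 - 2*x*m1)*(p2+q2) - 2*k*p2*q2*m2) * h2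
      + ((2*x - 2*m1)*m2*(p2+q2) + m2*(q2*(m1-p1) - p2*(q1-m1))) * h1 + m2*p2*q2 * hC3
  have hT' : q2*m2*((x-p1)^2+(y-p2)^2) + p2*m2*((x-q1)^2+(y-q2)^2)
      + 4*y*p2*q2*m2 - (4*k*y*p2*q2*m2 + 2*k*p2*q2*((x-m1)^2+(y-m2)^2)) = 0 := by
    rcases mul_eq_zero.mp hT with h | h
    · exact absurd h hS.ne'
    · exact h
  field_simp
  linear_combination hT'

lemma dist_coe_sq (z w : ℍ) :
    dist (z : ℂ) (w : ℂ) ^ 2 = (z.re - w.re)^2 + (z.im - w.im)^2 := by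
  rw [Complex.dist_eq_re_im, Real.sq_sqrt (by positivity)]
  rfl

lemma median_identity (o p q m : ℍ)
    (hpm : dist p m = dist p q / 2) (hmq : dist m q = dist p q / 2) :
    Real.cosh (dist o p) + Real.cosh (dist o q)
      = 2 * Real.cosh (dist p q / 2) * Real.cosh (dist o m) := by
  set k := Real.cosh (dist p q / 2) with hk
  have hcosh2 : Real.cosh (dist p q) = 2 * k^2 - 1 := by
    rw [show dist p q = 2 * (dist p q / 2) by ring, Real.cosh_two_mul, hk, Real.sinh_sq]; ring
  have e1 := UpperHalfPlane.cosh_dist p m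
  rw [hpm, ← hk, dist_coe_sq] at e1
  have e2 := UpperHalfPlane.cosh_dist m q
  rw [hmq, ← hk, dist_coe_sq] at e2
  have e3 := UpperHalfPlane.cosh_dist p q
  rw [hcosh2, dist_coe_sq] at e3
  have hC1 : (p.re - m.re)^2 + (p.im - m.im)^2 = 2*p.im*m.im*(k-1) := by
    have h := e1
    field_simp at h
    linarith [h]
  have hC2 : (q.re - m.re)^2 + (q.im - m.im)^2 = 2*q.im*m.im*(k-1) := by
    have h := e2
    field_simp at h
    nlinarith [h]
  have hC3 : (p.re - q.re)^2 + (p.im - q.im)^2 = 4*p.im*q.im*(k^2-1) := by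
    have h := e3
    field_simp at h
    nlinarith [h]
  rw [UpperHalfPlane.cosh_dist, UpperHalfPlane.cosh_dist, UpperHalfPlane.cosh_dist,
    dist_coe_sq, dist_coe_sq, dist_coe_sq]
  have := median_alg p.re p.im q.re q.im m.re m.im o.re o.im k
    p.im_pos q.im_pos m.im_pos o.im_pos hC1 hC2 hC3
  linear_combination this

lemma cosh_le_exp_of_nonneg {x : ℝ} (hx : 0 ≤ x) : Real.cosh x ≤ Real.exp x := by
  rw [Real.cosh_eq]
  have h : Real.exp (-x) ≤ Real.exp x := Real.exp_le_exp.mpr (by linarith)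
  linarith

/-- The basic δ-hyperbolicity inequality for the hyperbolic plane with `δ = 5`. -/
theorem hyperbolicity_inequality (o p q m : ℍ)
    (hpm : dist p m = dist p q / 2) (hmq : dist m q = dist p q / 2) :
    dist o m + dist p q / 2 - 5 ≤ max (dist o p) (dist o q) := by
  have hid := median_identity o p q m hpm hmq
  set M := max (dist o p) (dist o q) with hM
  have h1 : Real.exp (dist o m + dist p q / 2) / 2
      ≤ 2 * Real.cosh (dist p q / 2) * Real.cosh (dist o m) := by
    rw [Real.exp_add]
    nlinarith [Real.exp_pos (-(dist o m)), Real.exp_pos (-(dist p q / 2)),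
      Real.exp_pos (dist o m), Real.exp_pos (dist p q / 2),
      Real.cosh_eq (dist o m), Real.cosh_eq (dist p q / 2)]
  have h2 : Real.cosh (dist o p) + Real.cosh (dist o q) ≤ 2 * Real.exp M := by
    have a1 : Real.cosh (dist o p) ≤ Real.exp (dist o p) := cosh_le_exp_of_nonneg dist_nonneg
    have a2 : Real.cosh (dist o q) ≤ Real.exp (dist o q) := cosh_le_exp_of_nonneg dist_nonneg
    have b1 : Real.exp (dist o p) ≤ Real.exp M := Real.exp_le_exp.mpr (le_max_left _ _)
    have b2 : Real.exp (dist o q) ≤ Real.exp M := Real.exp_le_exp.mpr (le_max_right _ _)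
    linarith
  have h3 : Real.exp (dist o m + dist p q / 2) ≤ Real.exp (Real.log 4 + M) := by
    have h5 : Real.exp (Real.log 4 + M) = 4 * Real.exp M := by
      rw [Real.exp_add, Real.exp_log (by norm_num : (0:ℝ) < 4)]
    rw [h5]
    linarith
  have h4 : dist o m + dist p q / 2 ≤ Real.log 4 + M := Real.exp_le_exp.mp h3
  have hlog : Real.log 4 ≤ 5 := by
    have := Real.log_le_sub_one_of_pos (by norm_num : (0:ℝ) < 4)
    linarith
  linarith
end

section
/- Let X be a nonempty finite subset of the hyperbolic plane ℍ. Then there exists a point m ∈ ℍ such that X is contained in the closed ball of radius diam(X)/2 + 5 centered at m. -/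
open scoped UpperHalfPlane MatrixGroups
open Real

namespace HypBall


/-- cosh of hyperbolic distance in coordinates. -/
lemma cosh_dist_coords (z w : ℍ) :
    Real.cosh (dist z w) =
      1 + ((z.re - w.re) ^ 2 + (z.im - w.im) ^ 2) / (2 * z.im * w.im) := by
  rw [UpperHalfPlane.cosh_dist, Complex.dist_eq_re_im, Real.sq_sqrt (by positivity)]
  simp [UpperHalfPlane.coe_re, UpperHalfPlane.coe_im]

/-- key median inequality on a vertical geodesic -/
lemma vertical_median (x y m z : ℍ) (hx : x.re = 0) (hy : y.re = 0) (hm : m.re = 0)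
    (hmim : m.im = Real.sqrt (x.im * y.im))
    (h1 : dist z x ≤ dist x y) (h2 : dist z y ≤ dist x y) :
    dist z m ≤ dist x y / 2 + 5 := by
  set D := dist x y with hD
  have hD0 : 0 ≤ D := dist_nonneg
  have ha : 0 < x.im := x.im_pos
  have hb : 0 < y.im := y.im_pos
  have hv : 0 < z.im := z.im_pos
  set g := Real.sqrt (x.im * y.im) with hg'
  have hg : 0 < g := Real.sqrt_pos.2 (by positivity)
  have hg2 : g ^ 2 = x.im * y.im := Real.sq_sqrt (by positivity)
  have cD : Real.cosh D = 1 + (x.im - y.im) ^ 2 / (2 * x.im * y.im) := by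
    rw [hD, cosh_dist_coords, hx, hy]; ring_nf
  clear_value D g
  clear hD hg'
  -- cosh values
  have c1 : Real.cosh (dist z x)
      = 1 + (z.re ^ 2 + (z.im - x.im) ^ 2) / (2 * z.im * x.im) := by
    rw [cosh_dist_coords, hx]; ring_nf
  have c2 : Real.cosh (dist z y)
      = 1 + (z.re ^ 2 + (z.im - y.im) ^ 2) / (2 * z.im * y.im) := by
    rw [cosh_dist_coords, hy]; ring_nf
  have cm : Real.cosh (dist z m)
      = (z.re ^ 2 + z.im ^ 2 + g ^ 2) / (2 * z.im * g) := by
    rw [cosh_dist_coords, hm, hmim]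
    field_simp
    ring
  -- cosh (D/2)
  have hhalfpos : 0 < Real.cosh (D / 2) := Real.cosh_pos _
  have hdouble : Real.cosh D = 2 * Real.cosh (D / 2) ^ 2 - 1 := by
    have h1 := Real.cosh_two_mul (D / 2)
    have h2 := Real.cosh_sq_sub_sinh_sq (D / 2)
    rw [show 2 * (D / 2) = D by ring] at h1
    linarith
  have chalf : Real.cosh (D / 2) = (x.im + y.im) / (2 * g) := by
    have hsq : Real.cosh (D / 2) ^ 2 = ((x.im + y.im) / (2 * g)) ^ 2 := by
      have e1 : ((x.im + y.im) / (2 * g)) ^ 2 = (x.im + y.im) ^ 2 / (4 * (x.im * y.im)) := by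
        rw [div_pow, ← hg2]; ring
      rw [e1]
      rw [cD] at hdouble
      field_simp at hdouble ⊢
      linarith [hdouble]
    have : Real.cosh (D / 2) = Real.sqrt (((x.im + y.im) / (2 * g)) ^ 2) := by
      rw [← hsq, Real.sqrt_sq hhalfpos.le]
    rw [this, Real.sqrt_sq (by positivity)]
  -- median identity
  have med : Real.cosh (dist z x) + Real.cosh (dist z y)
      = 2 * Real.cosh (dist z m) * Real.cosh (D / 2) := by
    rw [c1, c2, cm, chalf]
    have h4 : (2 * z.im * g) * (2 * g) = 4 * z.im * (x.im * y.im) := by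
      rw [← hg2]; ring
    field_simp
    ring_nf
    simp only [hg2]
    ring
  -- bounds
  have hczx : Real.cosh (dist z x) ≤ Real.cosh D := by
    rw [Real.cosh_le_cosh, abs_of_nonneg dist_nonneg, abs_of_nonneg hD0]; exact h1
  have hczy : Real.cosh (dist z y) ≤ Real.cosh D := by
    rw [Real.cosh_le_cosh, abs_of_nonneg dist_nonneg, abs_of_nonneg hD0]; exact h2
  have hfive : 2 * Real.cosh (D / 2) ≤ Real.cosh (D / 2 + 5) := by
    rw [Real.cosh_add]
    have h5 : (3 : ℝ) ≤ Real.cosh 5 := by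
      have h6 : (6 : ℝ) ≤ Real.exp 5 := by
        nlinarith [Real.add_one_le_exp (5 : ℝ)]
      have h0 : 0 < Real.exp (-(5:ℝ)) := Real.exp_pos _
      rw [Real.cosh_eq]
      nlinarith
    have hs : 0 ≤ Real.sinh (D / 2) := Real.sinh_nonneg_iff.2 (by linarith)
    have hs5 : 0 ≤ Real.sinh 5 := Real.sinh_nonneg_iff.2 (by norm_num)
    have e1 : 2 * Real.cosh (D / 2) ≤ Real.cosh (D / 2) * 3 := by linarith
    have e2 : Real.cosh (D / 2) * 3 ≤ Real.cosh (D / 2) * Real.cosh 5 :=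
      mul_le_mul_of_nonneg_left h5 hhalfpos.le
    have e3 : 0 ≤ Real.sinh (D / 2) * Real.sinh 5 := mul_nonneg hs hs5
    linarith
  have key : Real.cosh (dist z m) ≤ Real.cosh (D / 2 + 5) := by
    have hk1 : 2 * Real.cosh (dist z m) * Real.cosh (D / 2) ≤ 2 * Real.cosh D := by
      rw [← med]; linarith
    have hk2 : 2 * Real.cosh D ≤ (2 * Real.cosh (D / 2)) * (2 * Real.cosh (D / 2)) := by
      have hc2 : (2 * Real.cosh (D / 2)) * (2 * Real.cosh (D / 2))
          = 4 * Real.cosh (D / 2) ^ 2 := by ring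
      rw [hc2]; linarith
    have hk3 : (2 * Real.cosh (D/2)) * (2 * Real.cosh (D / 2))
        ≤ Real.cosh (D / 2 + 5) * (2 * Real.cosh (D / 2)) :=
      mul_le_mul_of_nonneg_right hfive (by positivity)
    have hch := le_trans hk1 (le_trans hk2 hk3)
    have hch2 : Real.cosh (dist z m) * (2 * Real.cosh (D / 2))
        ≤ Real.cosh (D / 2 + 5) * (2 * Real.cosh (D / 2)) := by linarith
    exact le_of_mul_le_mul_right hch2 (by positivity)
  have hfin := (Real.cosh_le_cosh).1 key
  rw [abs_of_nonneg dist_nonneg, abs_of_nonneg (by linarith : (0:ℝ) ≤ D / 2 + 5)] at hfin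
  exact hfin



lemma re_smul_zero (g : SL(2,ℝ)) (z : ℍ)
    (h : ((g : Matrix (Fin 2) (Fin 2) ℝ) 0 0 * z.re + (g : Matrix (Fin 2) (Fin 2) ℝ) 0 1) *
        ((g : Matrix (Fin 2) (Fin 2) ℝ) 1 0 * z.re + (g : Matrix (Fin 2) (Fin 2) ℝ) 1 1)
        + (g : Matrix (Fin 2) (Fin 2) ℝ) 0 0 * (g : Matrix (Fin 2) (Fin 2) ℝ) 1 0 * z.im ^ 2
        = 0) :
    (g • z).re = 0 := by
  have hc : ((g • z : ℍ) : ℂ)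
      = (((g : Matrix (Fin 2) (Fin 2) ℝ) 0 0 : ℂ) * z + ((g : Matrix (Fin 2) (Fin 2) ℝ) 0 1 : ℂ)) /
        (((g : Matrix (Fin 2) (Fin 2) ℝ) 1 0 : ℂ) * z + ((g : Matrix (Fin 2) (Fin 2) ℝ) 1 1 : ℂ)) := by
    rw [UpperHalfPlane.specialLinearGroup_apply]
    simp
  have : (g • z).re = (((g • z : ℍ) : ℂ)).re := rfl
  rw [this, hc, Complex.div_re, ← add_div]
  have hnum : (((g : Matrix (Fin 2) (Fin 2) ℝ) 0 0 : ℂ) * z + ((g : Matrix (Fin 2) (Fin 2) ℝ) 0 1 : ℂ)).re *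
        (((g : Matrix (Fin 2) (Fin 2) ℝ) 1 0 : ℂ) * z + ((g : Matrix (Fin 2) (Fin 2) ℝ) 1 1 : ℂ)).re +
      (((g : Matrix (Fin 2) (Fin 2) ℝ) 0 0 : ℂ) * z + ((g : Matrix (Fin 2) (Fin 2) ℝ) 0 1 : ℂ)).im *
        (((g : Matrix (Fin 2) (Fin 2) ℝ) 1 0 : ℂ) * z + ((g : Matrix (Fin 2) (Fin 2) ℝ) 1 1 : ℂ)).im = 0 := by
    simp only [Complex.add_re, Complex.mul_re, Complex.ofReal_re, Complex.ofReal_im,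
      Complex.add_im, Complex.mul_im, UpperHalfPlane.coe_re, UpperHalfPlane.coe_im]
    linear_combination h
  rw [hnum, zero_div]




lemma exists_normalizing (x y : ℍ) : ∃ g : SL(2,ℝ), (g • x).re = 0 ∧ (g • y).re = 0 := by
  by_cases hre : x.re = y.re
  · refine ⟨⟨!![1, -x.re; 0, 1], by simp [Matrix.det_fin_two_of]⟩, ?_, ?_⟩
    · apply re_smul_zero
      norm_num
    · apply re_smul_zero
      norm_num [← hre]
  · set u1 := x.re
    set v1 := x.im
    set u2 := y.re
    set v2 := y.im
    have hv1 : 0 < v1 := x.im_pos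
    have hv2 : 0 < v2 := y.im_pos
    have hd : u2 - u1 ≠ 0 := sub_ne_zero.2 (Ne.symm hre)
    set c := (u2 ^ 2 + v2 ^ 2 - u1 ^ 2 - v1 ^ 2) / (2 * (u2 - u1)) with hc
    have hcy : (u2 - c) ^ 2 + v2 ^ 2 = (u1 - c) ^ 2 + v1 ^ 2 := by
      have hc' : c * (2 * (u2 - u1)) = u2 ^ 2 + v2 ^ 2 - u1 ^ 2 - v1 ^ 2 :=
        div_mul_cancel₀ _ (by simpa using hd)
      nlinarith [hc']
    set r := Real.sqrt ((u1 - c) ^ 2 + v1 ^ 2) with hrdef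
    have hr : 0 < r := Real.sqrt_pos.2 (by positivity)
    have hr2 : r ^ 2 = (u1 - c) ^ 2 + v1 ^ 2 := Real.sq_sqrt (by positivity)
    set s := Real.sqrt (2 * r) with hsdef
    have hs : 0 < s := Real.sqrt_pos.2 (by positivity)
    have hs2 : s ^ 2 = 2 * r := Real.sq_sqrt (by positivity)
    have hdet : Matrix.det !![1/s, -(c+r)/s; 1/s, -(c-r)/s] = 1 := by
      rw [Matrix.det_fin_two_of]
      field_simp
      linarith [hs2]
    refine ⟨⟨!![1/s, -(c+r)/s; 1/s, -(c-r)/s], hdet⟩, ?_, ?_⟩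
    · apply re_smul_zero
      norm_num
      field_simp
      linear_combination -hr2
    · apply re_smul_zero
      norm_num
      field_simp
      linear_combination -hr2 + hcy


end HypBall

/-- Any nonempty finite subset of the hyperbolic plane of diameter `D` is contained in a
closed ball of radius `D/2 + 5`. -/
theorem finite_set_in_small_ball (X : Set ℍ) (hfin : X.Finite) (hne : X.Nonempty) :
    ∃ m : ℍ, X ⊆ Metric.closedBall m (Metric.diam X / 2 + 5) := by
  obtain ⟨x, hx, y, hy, hmax⟩ : ∃ x ∈ X, ∃ y ∈ X, ∀ p ∈ X, ∀ q ∈ X, dist p q ≤ dist x y := by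
    obtain ⟨⟨x, y⟩, hxy, hm⟩ := Set.Finite.exists_maximalFor
      (fun p : ℍ × ℍ => dist p.1 p.2) (X ×ˢ X) (hfin.prod hfin) (hne.prod hne)
    refine ⟨x, hxy.1, y, hxy.2, fun p hp q hq => ?_⟩
    rcases le_total (dist p q) (dist x y) with h | h
    · exact h
    · exact hm (j := (p, q)) ⟨hp, hq⟩ h
  have hdiam : dist x y = Metric.diam X := by
    apply le_antisymm (Metric.dist_le_diam_of_mem hfin.isBounded hx hy)
    exact Metric.diam_le_of_forall_dist_le dist_nonneg fun p hp q hq => hmax p hp q hq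
  obtain ⟨g, hgx, hgy⟩ := HypBall.exists_normalizing x y
  have hmpos : 0 < (Complex.mk 0 (Real.sqrt ((g • x).im * (g • y).im))).im := by
    have := (g • x).im_pos
    have := (g • y).im_pos
    show 0 < Real.sqrt ((g • x).im * (g • y).im)
    positivity
  set m' : ℍ := UpperHalfPlane.mk (Complex.mk 0 (Real.sqrt ((g • x).im * (g • y).im))) hmpos
    with hm'
  refine ⟨g⁻¹ • m', fun z hz => ?_⟩
  rw [Metric.mem_closedBall]
  have h1 : dist (g • z) (g • x) ≤ dist (g • x) (g • y) := by
    rw [dist_smul, dist_smul]; exact hmax z hz x hx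
  have h2 : dist (g • z) (g • y) ≤ dist (g • x) (g • y) := by
    rw [dist_smul, dist_smul]; exact hmax z hz y hy
  have hkey := HypBall.vertical_median (g • x) (g • y) m' (g • z) hgx hgy rfl rfl h1 h2
  have hzd : dist z (g⁻¹ • m') = dist (g • z) m' := by
    rw [← dist_smul g, smul_inv_smul]
  rw [hzd]
  rw [dist_smul] at hkey
  rw [hdiam] at hkey
  exact hkey
end

section
/- Let X be a bounded subset of the hyperbolic plane ℍ, let p, q ∈ X be points realizing the diameter of X (dist(p,q) = diam(X)), let m be a midpoint of p and q, and let c be a barycenter of X. Then dist(c, m) ≤ 10. -/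
open scoped UpperHalfPlane
open Real

noncomputable def Vv0 (z : ℍ) : ℝ := (z.re ^ 2 + z.im ^ 2 + 1) / (2 * z.im)
noncomputable def Vv1 (z : ℍ) : ℝ := z.re / z.im
noncomputable def Vv2 (z : ℍ) : ℝ := (z.re ^ 2 + z.im ^ 2 - 1) / (2 * z.im)

lemma inner_eq (z w : ℍ) :
    Vv0 z * Vv0 w - Vv1 z * Vv1 w - Vv2 z * Vv2 w = Real.cosh (dist z w) := by
  have hz : (0:ℝ) < z.im := z.im_pos
  have hw : (0:ℝ) < w.im := w.im_pos
  rw [UpperHalfPlane.cosh_dist]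
  have hd : dist (z : ℂ) (w : ℂ) ^ 2 = (z.re - w.re) ^ 2 + (z.im - w.im) ^ 2 := by
    rw [Complex.dist_eq, Complex.sq_norm, Complex.normSq_apply]
    simp [UpperHalfPlane.coe_re, UpperHalfPlane.coe_im]
    ring
  rw [hd]
  unfold Vv0 Vv1 Vv2
  field_simp
  ring

lemma median_law (p q m : ℍ) (hpm : dist p m = dist p q / 2) (hmq : dist m q = dist p q / 2)
    (x : ℍ) :
    Real.cosh (dist x p) + Real.cosh (dist x q)
      = 2 * Real.cosh (dist p m) * Real.cosh (dist x m) := by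
  set t := Real.cosh (dist p m) with ht
  have hpq2 : dist p q = 2 * dist p m := by rw [hpm]; ring
  have ipq : Vv0 p * Vv0 q - Vv1 p * Vv1 q - Vv2 p * Vv2 q = 2 * t ^ 2 - 1 := by
    rw [inner_eq, hpq2, Real.cosh_two_mul, Real.sinh_sq]
    ring
  have ipm : Vv0 p * Vv0 m - Vv1 p * Vv1 m - Vv2 p * Vv2 m = t := inner_eq p m
  have iqm : Vv0 q * Vv0 m - Vv1 q * Vv1 m - Vv2 q * Vv2 m = t := by
    rw [inner_eq, dist_comm q m, hmq, ← hpm]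
  have ipp : Vv0 p * Vv0 p - Vv1 p * Vv1 p - Vv2 p * Vv2 p = 1 := by
    have := inner_eq p p; rwa [dist_self, Real.cosh_zero] at this
  have iqq : Vv0 q * Vv0 q - Vv1 q * Vv1 q - Vv2 q * Vv2 q = 1 := by
    have := inner_eq q q; rwa [dist_self, Real.cosh_zero] at this
  have imm : Vv0 m * Vv0 m - Vv1 m * Vv1 m - Vv2 m * Vv2 m = 1 := by
    have := inner_eq m m; rwa [dist_self, Real.cosh_zero] at this
  set a0 := Vv0 p + Vv0 q - 2 * t * Vv0 m with ha0d
  set a1 := Vv1 p + Vv1 q - 2 * t * Vv1 m with ha1d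
  set a2 := Vv2 p + Vv2 q - 2 * t * Vv2 m with ha2d
  have h0 : a0 ^ 2 - a1 ^ 2 - a2 ^ 2 = 0 := by
    rw [ha0d, ha1d, ha2d]
    linear_combination ipp + iqq + 4 * t ^ 2 * imm + 2 * ipq - 4 * t * ipm - 4 * t * iqm
  have horth : a0 * Vv0 m - a1 * Vv1 m - a2 * Vv2 m = 0 := by
    rw [ha0d, ha1d, ha2d]
    linear_combination ipm + iqm - 2 * t * imm
  have key : a0 ^ 2 + (a1 * Vv2 m - a2 * Vv1 m) ^ 2 = 0 := by
    linear_combination (-(Vv1 m ^ 2 + Vv2 m ^ 2)) * h0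
      + (a0 * Vv0 m + a1 * Vv1 m + a2 * Vv2 m) * horth + (-(a0 ^ 2)) * imm
  have ha0 : a0 = 0 := by
    have h1 : a0 ^ 2 = 0 := by
      have := sq_nonneg a0
      have := sq_nonneg (a1 * Vv2 m - a2 * Vv1 m)
      linarith
    exact pow_eq_zero_iff (two_ne_zero) |>.mp h1
  have hcross : a1 * Vv2 m - a2 * Vv1 m = 0 := by
    have h1 : (a1 * Vv2 m - a2 * Vv1 m) ^ 2 = 0 := by
      have := sq_nonneg a0
      have := sq_nonneg (a1 * Vv2 m - a2 * Vv1 m)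
      linarith
    exact pow_eq_zero_iff (two_ne_zero) |>.mp h1
  have ha0sq : a0 ^ 2 = 0 := by rw [ha0]; ring
  have h12 : a1 ^ 2 + a2 ^ 2 = 0 := by linarith
  have ha1 : a1 = 0 := by
    have h1 : a1 ^ 2 = 0 := by
      have := sq_nonneg a1; have := sq_nonneg a2; linarith
    exact pow_eq_zero_iff (two_ne_zero) |>.mp h1
  have ha2 : a2 = 0 := by
    have h1 : a2 ^ 2 = 0 := by
      have := sq_nonneg a1; have := sq_nonneg a2; linarith
    exact pow_eq_zero_iff (two_ne_zero) |>.mp h1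
  have e0 : Vv0 p + Vv0 q = 2 * t * Vv0 m := by rw [ha0d] at ha0; linarith
  have e1 : Vv1 p + Vv1 q = 2 * t * Vv1 m := by rw [ha1d] at ha1; linarith
  have e2 : Vv2 p + Vv2 q = 2 * t * Vv2 m := by rw [ha2d] at ha2; linarith
  have ixp := inner_eq x p
  have ixq := inner_eq x q
  have ixm := inner_eq x m
  linear_combination (-1) * ixp + (-1) * ixq + 2 * t * ixm
    + Vv0 x * e0 + (-(Vv1 x)) * e1 + (-(Vv2 x)) * e2

lemma exp_le_two_cosh (x : ℝ) : Real.exp x ≤ 2 * Real.cosh x := by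
  rw [Real.cosh_eq]
  have := (Real.exp_pos (-x)).le
  linarith

/-- `c` is a barycenter of `X` if it is the center of a smallest closed ball containing
`X`. -/
def IsBarycenter (X : Set ℍ) (c : ℍ) : Prop :=
  ∃ r : ℝ, 0 ≤ r ∧ X ⊆ Metric.closedBall c r ∧
    ∀ (c' : ℍ) (r' : ℝ), 0 ≤ r' → X ⊆ Metric.closedBall c' r' → r ≤ r'

/-- The barycenter of a bounded set in the hyperbolic plane is `10`-close to the midpoint
of any diameter-realizing segment. -/
theorem barycenter_close_to_midpoint (X : Set ℍ) (hbdd : Bornology.IsBounded X)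
    (p q : ℍ) (hp : p ∈ X) (hq : q ∈ X) (hdiam : dist p q = Metric.diam X)
    (m : ℍ) (hpm : dist p m = dist p q / 2) (hmq : dist m q = dist p q / 2)
    (c : ℍ) (hc : IsBarycenter X c) :
    dist c m ≤ 10 := by
  obtain ⟨r, hr0, hXr, hmin⟩ := hc
  set D := dist p q with hD
  have hD0 : 0 ≤ D := dist_nonneg
  set t := Real.cosh (dist p m) with ht
  have ht1 : 1 ≤ t := Real.one_le_cosh _
  have htexp : Real.exp (D / 2) ≤ 2 * t := by
    rw [ht, hpm]; exact exp_le_two_cosh _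
  have htexp' : t ≤ Real.exp (D / 2) := by
    rw [ht, hpm]; exact cosh_le_exp_of_nonneg (by positivity)
  -- Step 1: every point of X is within D/2 + log 4 of m
  have hstep1 : ∀ x ∈ X, dist x m ≤ D / 2 + Real.log 4 := by
    intro x hx
    have hxp : dist x p ≤ D := by
      rw [hdiam]; exact Metric.dist_le_diam_of_mem hbdd hx hp
    have hxq : dist x q ≤ D := by
      rw [hdiam]; exact Metric.dist_le_diam_of_mem hbdd hx hq
    have hmed := median_law p q m hpm hmq x
    have hcD : Real.cosh D = 2 * t ^ 2 - 1 := by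
      rw [ht, show D = 2 * dist p m by rw [hpm]; ring, Real.cosh_two_mul, Real.sinh_sq]; ring
    have h1 : Real.cosh (dist x p) ≤ Real.cosh D :=
      Real.cosh_le_cosh.mpr (by rw [abs_of_nonneg dist_nonneg, abs_of_nonneg hD0]; exact hxp)
    have h2 : Real.cosh (dist x q) ≤ Real.cosh D :=
      Real.cosh_le_cosh.mpr (by rw [abs_of_nonneg dist_nonneg, abs_of_nonneg hD0]; exact hxq)
    have hcxm : Real.cosh (dist x m) ≤ 2 * t := by
      have ht0 : 0 < t := lt_of_lt_of_le one_pos ht1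
      nlinarith [hmed, h1, h2, hcD]
    have hexp : Real.exp (dist x m) ≤ Real.exp (D / 2 + Real.log 4) := by
      have e1 : Real.exp (dist x m) ≤ 2 * Real.cosh (dist x m) := exp_le_two_cosh _
      have e2 : Real.exp (D / 2 + Real.log 4) = 4 * Real.exp (D / 2) := by
        rw [Real.exp_add, Real.exp_log (by norm_num : (0:ℝ) < 4)]; ring
      rw [e2]
      calc Real.exp (dist x m) ≤ 2 * Real.cosh (dist x m) := e1
        _ ≤ 2 * (2 * t) := by linarith
        _ ≤ 4 * Real.exp (D / 2) := by linarith
    exact Real.exp_le_exp.mp hexp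
  -- Step 2: r ≤ D/2 + log 4
  have hlog4 : 0 ≤ Real.log 4 := Real.log_nonneg (by norm_num)
  have hr_le : r ≤ D / 2 + Real.log 4 := by
    refine hmin m (D / 2 + Real.log 4) (by linarith) ?_
    intro x hx
    exact Metric.mem_closedBall.mpr (hstep1 x hx)
  -- Step 3: distances from c to p and q
  have hcp : dist c p ≤ r := by
    have := hXr hp; rw [Metric.mem_closedBall] at this; rw [dist_comm]; exact this
  have hcq : dist c q ≤ r := by
    have := hXr hq; rw [Metric.mem_closedBall] at this; rw [dist_comm]; exact this
  -- Step 4: bound cosh (dist c m)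
  have hmed := median_law p q m hpm hmq c
  have hcoshr : Real.cosh r ≤ Real.cosh (D / 2 + Real.log 4) :=
    Real.cosh_le_cosh.mpr (by
      rw [abs_of_nonneg hr0, abs_of_nonneg (by linarith : (0:ℝ) ≤ D / 2 + Real.log 4)]
      exact hr_le)
  have h1 : Real.cosh (dist c p) ≤ Real.cosh r :=
    Real.cosh_le_cosh.mpr (by rw [abs_of_nonneg dist_nonneg, abs_of_nonneg hr0]; exact hcp)
  have h2 : Real.cosh (dist c q) ≤ Real.cosh r :=
    Real.cosh_le_cosh.mpr (by rw [abs_of_nonneg dist_nonneg, abs_of_nonneg hr0]; exact hcq)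
  have hcoshDlog : Real.cosh (D / 2 + Real.log 4) ≤ 4 * Real.exp (D / 2) := by
    have := cosh_le_exp_of_nonneg (by linarith : (0:ℝ) ≤ D / 2 + Real.log 4)
    have e2 : Real.exp (D / 2 + Real.log 4) = 4 * Real.exp (D / 2) := by
      rw [Real.exp_add, Real.exp_log (by norm_num : (0:ℝ) < 4)]; ring
    linarith [e2 ▸ this]
  have hccm : Real.cosh (dist c m) ≤ 8 := by
    have ht0 : 0 < t := lt_of_lt_of_le one_pos ht1
    have hE : 0 < Real.exp (D / 2) := Real.exp_pos _
    -- 2 t cosh(dcm) ≤ 2 cosh r ≤ 8 exp(D/2) ≤ 8 * 2t  / 2 ... :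
    -- cosh(dcm) * (2t) ≤ 8 exp(D/2) ≤ 8 * (2t)
    have hA : 2 * t * Real.cosh (dist c m) ≤ 8 * Real.exp (D / 2) := by
      calc 2 * t * Real.cosh (dist c m) = Real.cosh (dist c p) + Real.cosh (dist c q) :=
            hmed.symm
        _ ≤ 2 * Real.cosh r := by linarith
        _ ≤ 2 * (4 * Real.exp (D / 2)) := by linarith
        _ = 8 * Real.exp (D / 2) := by ring
    nlinarith [hA, htexp, Real.one_le_cosh (dist c m)]
  have hfinal : Real.exp (dist c m) ≤ Real.exp 10 := by
    have e1 : Real.exp (dist c m) ≤ 16 := by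
      have := exp_le_two_cosh (dist c m); linarith
    have e2 : (16:ℝ) ≤ Real.exp 10 := by
      have h5 : (6:ℝ) ≤ Real.exp 5 := by
        have := Real.add_one_le_exp (5:ℝ); linarith
      have : Real.exp 10 = Real.exp 5 * Real.exp 5 := by
        rw [← Real.exp_add]; norm_num
      nlinarith
    linarith
  exact Real.exp_le_exp.mp hfinal
end

section
/- Let X be a nonempty finite subset of the hyperbolic plane ℍ with diameter D, let c be a barycenter of X, let o ∈ ℍ and R ≥ 0 be such that X ⊆ closedBall(o, R) and some point p' ∈ X satisfies dist(o, p') = R (so closedBall(o, R) is the smallest ball centered at o containing X). Then R − D/2 − 5 ≤ dist(o, c) ≤ R − D/2 + 15. -/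
open scoped UpperHalfPlane MatrixGroups
open Real UpperHalfPlane

noncomputable section

/-- Ptolemy inequality in ℂ. -/
lemma ptolemy_complex (a b c d : ℂ) :
    ‖a - c‖ * ‖b - d‖ ≤
      ‖a - b‖ * ‖c - d‖ + ‖a - d‖ * ‖b - c‖ := by
  have h : (a - c) * (b - d) = (a - b) * (c - d) + (a - d) * (b - c) := by ring
  calc ‖a - c‖ * ‖b - d‖
      = ‖(a - b) * (c - d) + (a - d) * (b - c)‖ := by rw [← norm_mul, h]
    _ ≤ _ := by
        refine (norm_add_le _ _).trans_eq ?_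
        rw [norm_mul, norm_mul]

lemma abs_sub_le_abs_sub_conj (z w : ℂ) (hz : 0 ≤ z.im) (hw : 0 ≤ w.im) :
    ‖z - w‖ ≤ ‖z - (starRingEnd ℂ) w‖ := by
  rw [Complex.norm_def, Complex.norm_def]
  apply Real.sqrt_le_sqrt
  simp only [Complex.normSq_apply, Complex.sub_re, Complex.sub_im, Complex.conj_re,
    Complex.conj_im]
  nlinarith [mul_nonneg hz hw]

lemma abs_conj_sub (z w : ℂ) :
    ‖(starRingEnd ℂ) z - w‖ = ‖z - (starRingEnd ℂ) w‖ := by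
  rw [← Complex.norm_conj ((starRingEnd ℂ) z - w), map_sub, Complex.conj_conj]

lemma abs_sub_conj_comm (u v : ℂ) :
    ‖u - (starRingEnd ℂ) v‖ = ‖v - (starRingEnd ℂ) u‖ := by
  rw [← Complex.norm_conj (u - (starRingEnd ℂ) v), map_sub, Complex.conj_conj,
    norm_sub_rev]

lemma num_ptolemy (a b c d : ℂ) (ha : 0 ≤ a.im) (hb : 0 ≤ b.im) (hc : 0 ≤ c.im)
    (hd : 0 ≤ d.im) :
    (‖a - b‖ + ‖a - (starRingEnd ℂ) b‖) *
        (‖c - d‖ + ‖c - (starRingEnd ℂ) d‖) ≤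
      (‖a - c‖ + ‖a - (starRingEnd ℂ) c‖) *
          (‖b - d‖ + ‖b - (starRingEnd ℂ) d‖) +
        (‖b - c‖ + ‖b - (starRingEnd ℂ) c‖) *
          (‖a - d‖ + ‖a - (starRingEnd ℂ) d‖) := by
  have t1 := ptolemy_complex a c b d
  have t2 := ptolemy_complex a c b ((starRingEnd ℂ) d)
  have t3 := ptolemy_complex a c ((starRingEnd ℂ) b) d
  have t4 := ptolemy_complex a c ((starRingEnd ℂ) b) ((starRingEnd ℂ) d)
  rw [norm_sub_rev c b] at t1 t2
  rw [norm_sub_rev ((starRingEnd ℂ) b) d,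
    abs_sub_conj_comm d b, abs_sub_conj_comm c b] at t3
  have e1 : ‖(starRingEnd ℂ) b - (starRingEnd ℂ) d‖ = ‖b - d‖ := by
    rw [← map_sub, Complex.norm_conj]
  rw [e1, abs_sub_conj_comm c b] at t4
  have h1 := abs_sub_le_abs_sub_conj a c ha hc
  nlinarith [norm_nonneg (a - b), norm_nonneg (a - (starRingEnd ℂ) b),
    norm_nonneg (c - d), norm_nonneg (c - (starRingEnd ℂ) d),
    norm_nonneg (a - c), norm_nonneg (b - d),
    norm_nonneg (b - (starRingEnd ℂ) d)]

lemma exp_ptolemy (a b c d : ℍ) :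
    Real.exp ((dist a b + dist c d) / 2) ≤
      Real.exp ((dist a c + dist b d) / 2) + Real.exp ((dist b c + dist a d) / 2) := by
  have key : ∀ z w : ℍ, Real.exp (dist z w / 2) =
      (‖(z : ℂ) - w‖ + ‖(z : ℂ) - (starRingEnd ℂ) w‖) /
        (2 * Real.sqrt (z.im * w.im)) := fun z w => by
    rw [exp_half_dist]
    simp [Complex.dist_eq]
  have hsq : ∀ z w : ℍ, Real.sqrt (z.im * w.im) = Real.sqrt z.im * Real.sqrt w.im := fun z w =>
    Real.sqrt_mul z.im_pos.le _
  have hmul : ∀ z w : ℝ, Real.exp ((z + w) / 2) = Real.exp (z / 2) * Real.exp (w / 2) :=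
    fun z w => by rw [← Real.exp_add]; ring_nf
  have ha := Real.sqrt_pos.2 a.im_pos
  have hb := Real.sqrt_pos.2 b.im_pos
  have hcc := Real.sqrt_pos.2 c.im_pos
  have hd := Real.sqrt_pos.2 d.im_pos
  rw [hmul, hmul, hmul, key, key, key, key, key, key]
  rw [hsq, hsq, hsq, hsq, hsq, hsq]
  rw [div_mul_div_comm, div_mul_div_comm, div_mul_div_comm]
  have hden : (2 * (Real.sqrt a.im * Real.sqrt b.im)) * (2 * (Real.sqrt c.im * Real.sqrt d.im))
      = (2 * (Real.sqrt a.im * Real.sqrt c.im)) * (2 * (Real.sqrt b.im * Real.sqrt d.im)) := by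
    ring
  have hden2 : (2 * (Real.sqrt a.im * Real.sqrt b.im)) * (2 * (Real.sqrt c.im * Real.sqrt d.im))
      = (2 * (Real.sqrt b.im * Real.sqrt c.im)) * (2 * (Real.sqrt a.im * Real.sqrt d.im)) := by
    ring
  rw [← hden, ← hden2, ← add_div, div_le_div_iff_of_pos_right (by positivity)]
  exact num_ptolemy a b c d (by rw [UpperHalfPlane.coe_im]; exact a.im_pos.le)
    (by rw [UpperHalfPlane.coe_im]; exact b.im_pos.le)
    (by rw [UpperHalfPlane.coe_im]; exact c.im_pos.le)
    (by rw [UpperHalfPlane.coe_im]; exact d.im_pos.le)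


/-- Four-point (Gromov hyperbolicity) condition for the hyperbolic plane,
with constant `2 * log 2`. -/
lemma four_point (w x y z : ℍ) :
    dist w x + dist y z ≤
      max (dist w y + dist x z) (dist w z + dist x y) + 2 * Real.log 2 := by
  have h := exp_ptolemy w x y z
  have h2 : Real.exp ((dist w x + dist y z) / 2) ≤
      2 * Real.exp (max (dist w y + dist x z) (dist w z + dist x y) / 2) := by
    refine h.trans ?_
    rw [two_mul]
    gcongr
    · exact le_max_left _ _
    · exact (add_comm (dist x y) (dist w z)) ▸ le_max_right _ _
  have h3 : Real.exp ((dist w x + dist y z) / 2) ≤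
      Real.exp ((max (dist w y + dist x z) (dist w z + dist x y) + 2 * Real.log 2) / 2) := by
    refine h2.trans_eq ?_
    rw [add_div, Real.exp_add, mul_comm]
    congr 1
    rw [show 2 * Real.log 2 / 2 = Real.log 2 by ring, Real.exp_log two_pos]
  have := Real.exp_le_exp.1 h3
  linarith

/-- Midpoints for points on a common vertical line. -/
lemma exists_midpoint_vertical (x y : ℍ) (h : x.re = y.re) :
    ∃ m : ℍ, dist x m = dist x y / 2 ∧ dist y m = dist x y / 2 := by
  have him : (0:ℝ) < Real.sqrt (x.im * y.im) := Real.sqrt_pos.2 (mul_pos x.im_pos y.im_pos)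
  set m : ℍ := UpperHalfPlane.mk ⟨x.re, Real.sqrt (x.im * y.im)⟩ him with hm
  have hmre : m.re = x.re := rfl
  have hmim : m.im = Real.sqrt (x.im * y.im) := rfl
  have hlog : Real.log m.im = (Real.log x.im + Real.log y.im) / 2 := by
    rw [hmim, Real.log_sqrt (mul_pos x.im_pos y.im_pos).le,
      Real.log_mul x.im_pos.ne' y.im_pos.ne']
  have hxy : dist x y = |Real.log x.im - Real.log y.im| := by
    rw [UpperHalfPlane.dist_of_re_eq h, Real.dist_eq]
  refine ⟨m, ?_, ?_⟩
  · rw [UpperHalfPlane.dist_of_re_eq hmre.symm, Real.dist_eq, hlog, hxy]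
    rw [show Real.log x.im - (Real.log x.im + Real.log y.im) / 2
        = (Real.log x.im - Real.log y.im) / 2 by ring, abs_div]
    simp
  · rw [UpperHalfPlane.dist_of_re_eq (show y.re = m.re by rw [hmre, h]), Real.dist_eq, hlog, hxy]
    rw [show Real.log y.im - (Real.log x.im + Real.log y.im) / 2
        = -((Real.log x.im - Real.log y.im) / 2) by ring, abs_neg, abs_div]
    simp


lemma div_re_eq_zero_aux (p q r t : ℝ) (z : ℍ)
    (h : (p * z.re + q) * (r * z.re + t) + p * z.im * (r * z.im) = 0) :
    (((p : ℂ) * z + q) / ((r : ℂ) * z + t)).re = 0 := by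
  rw [Complex.div_re]
  have h1 : ((p : ℂ) * z + q).re = p * z.re + q := by
    simp [Complex.add_re, Complex.mul_re, UpperHalfPlane.coe_re, UpperHalfPlane.coe_im]
  have h2 : ((p : ℂ) * z + q).im = p * z.im := by
    simp [Complex.add_im, Complex.mul_im, UpperHalfPlane.coe_re, UpperHalfPlane.coe_im]
  have h3 : ((r : ℂ) * z + t).re = r * z.re + t := by
    simp [Complex.add_re, Complex.mul_re, UpperHalfPlane.coe_re, UpperHalfPlane.coe_im]
  have h4 : ((r : ℂ) * z + t).im = r * z.im := by
    simp [Complex.add_im, Complex.mul_im, UpperHalfPlane.coe_re, UpperHalfPlane.coe_im]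
  rw [h1, h2, h3, h4, ← add_div, h, zero_div]

/-- Auxiliary element of `SL(2, ℝ)`. -/
def sl2Mk (p q r t : ℝ) (hdet : Matrix.det !![p, q; r, t] = 1) : SL(2, ℝ) :=
  ⟨!![p, q; r, t], hdet⟩

lemma sl2_mk_smul_re (p q r t : ℝ) (hdet : Matrix.det !![p, q; r, t] = 1) (z : ℍ)
    (h : (p * z.re + q) * (r * z.re + t) + p * z.im * (r * z.im) = 0) :
    (sl2Mk p q r t hdet • z).re = 0 := by
  rw [UpperHalfPlane.specialLinearGroup_apply, UpperHalfPlane.mk_re]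
  have e : ∀ i j, algebraMap ℝ ℝ (sl2Mk p q r t hdet i j)
      = !![p, q; r, t] i j := fun i j => by
    rw [Algebra.algebraMap_self_apply]
    rfl
  rw [e 0 0, e 0 1, e 1 0, e 1 1]
  have m00 : !![p, q; r, t] 0 0 = p := rfl
  have m01 : !![p, q; r, t] 0 1 = q := rfl
  have m10 : !![p, q; r, t] 1 0 = r := rfl
  have m11 : !![p, q; r, t] 1 1 = t := rfl
  rw [m00, m01, m10, m11]
  exact div_re_eq_zero_aux p q r t z h

lemma exists_smul_re_eq (x y : ℍ) : ∃ g : SL(2, ℝ), (g • x).re = (g • y).re := by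
  by_cases h : x.re = y.re
  · exact ⟨1, by rw [one_smul, one_smul, h]⟩
  · have hc : x.re - y.re ≠ 0 := sub_ne_zero.2 h
    set a : ℝ := x.re with ha'
    set b : ℝ := x.im with hb'
    set a' : ℝ := y.re with ha''
    set b' : ℝ := y.im with hb''
    set s : ℝ := (a^2 + b^2 - a'^2 - b'^2) / (2*(a - a')) with hs
    have hkey : (a - s)^2 + b^2 = (a' - s)^2 + b'^2 := by
      have : s * (2*(a - a')) = a^2 + b^2 - a'^2 - b'^2 := by
        rw [hs]; field_simp
      nlinarith [this]
    have hb0 : 0 < b := x.im_pos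
    have hb'0 : 0 < b' := y.im_pos
    set ρ : ℝ := Real.sqrt ((a - s)^2 + b^2) with hρ'
    have hρ : 0 < ρ := Real.sqrt_pos.2 (by positivity)
    have hρ2 : ρ^2 = (a - s)^2 + b^2 := Real.sq_sqrt (by positivity)
    set k : ℝ := Real.sqrt (2*ρ) with hk'
    have hk : 0 < k := Real.sqrt_pos.2 (by linarith)
    have hk2 : k^2 = 2*ρ := Real.sq_sqrt (by linarith)
    have hdet : Matrix.det !![1/k, (ρ - s)/k; -(1/k), (s + ρ)/k] = 1 := by
      rw [Matrix.det_fin_two_of]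
      field_simp
      nlinarith [hk2]
    have harith : ∀ z : ℍ, (z.re - s)^2 + z.im^2 = ρ^2 →
        (1/k * z.re + (ρ - s)/k) * (-(1/k) * z.re + (s + ρ)/k)
          + 1/k * z.im * (-(1/k) * z.im) = 0 := by
      intro z hz
      have hk0 : k ≠ 0 := hk.ne'
      have heq : (1/k * z.re + (ρ - s)/k) * (-(1/k) * z.re + (s + ρ)/k)
          + 1/k * z.im * (-(1/k) * z.im)
          = (ρ^2 - ((z.re - s)^2 + z.im^2)) / k^2 := by
        field_simp
        ring
      rw [heq, hz, sub_self, zero_div]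
    refine ⟨sl2Mk _ _ _ _ hdet, ?_⟩
    rw [sl2_mk_smul_re _ _ _ _ hdet x (harith x (by nlinarith [hρ2])),
      sl2_mk_smul_re _ _ _ _ hdet y (harith y (by nlinarith [hρ2, hkey]))]

/-- Midpoints exist in the hyperbolic plane. -/
lemma exists_midpoint (x y : ℍ) :
    ∃ m : ℍ, dist x m = dist x y / 2 ∧ dist y m = dist x y / 2 := by
  obtain ⟨g, hg⟩ := exists_smul_re_eq x y
  obtain ⟨m', h1, h2⟩ := exists_midpoint_vertical (g • x) (g • y) hg
  refine ⟨g⁻¹ • m', ?_, ?_⟩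
  · have e1 : dist (g • x) (g • (g⁻¹ • m')) = dist x (g⁻¹ • m') := dist_smul g x _
    rw [smul_inv_smul] at e1
    rw [← e1, h1, dist_smul]
  · have e2 : dist (g • y) (g • (g⁻¹ • m')) = dist y (g⁻¹ • m') := dist_smul g y _
    rw [smul_inv_smul] at e2
    rw [← e2, h2, dist_smul]

lemma exists_dist_eq_diam (X : Set ℍ) (hfin : X.Finite) (hne : X.Nonempty) :
    ∃ x ∈ X, ∃ y ∈ X, dist x y = Metric.diam X := by
  classical
  set s := hfin.toFinset with hs'
  have hs : s.Nonempty := by rwa [hs', Set.Finite.toFinset_nonempty]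
  obtain ⟨p, hp, hmax⟩ := (s ×ˢ s).exists_max_image (fun p => dist p.1 p.2) (hs.product hs)
  obtain ⟨hp1, hp2⟩ := Finset.mem_product.1 hp
  refine ⟨p.1, by rwa [← hfin.mem_toFinset], p.2, by rwa [← hfin.mem_toFinset], ?_⟩
  refine le_antisymm (Metric.dist_le_diam_of_mem hfin.isBounded
      (hfin.mem_toFinset.1 hp1) (hfin.mem_toFinset.1 hp2)) ?_
  refine Metric.diam_le_of_forall_dist_le dist_nonneg fun z hz w hw => ?_
  exact hmax (z, w) (Finset.mem_product.2 ⟨hfin.mem_toFinset.2 hz, hfin.mem_toFinset.2 hw⟩)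

/-- If `closedBall o R` is the smallest ball centered at `o` containing the nonempty finite
set `X` of diameter `D`, then `R - D/2 - 5 ≤ dist o c ≤ R - D/2 + 15` for the barycenter
`c` of `X`. -/
theorem dist_center_barycenter (X : Set ℍ) (hfin : X.Finite) (hne : X.Nonempty)
    (c : ℍ) (hc : IsBarycenter X c)
    (o : ℍ) (R : ℝ) (hR : 0 ≤ R) (hXR : X ⊆ Metric.closedBall o R)
    (p' : ℍ) (hp' : p' ∈ X) (hdist : dist o p' = R) :
    R - Metric.diam X / 2 - 5 ≤ dist o c ∧ dist o c ≤ R - Metric.diam X / 2 + 15 := by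
  obtain ⟨r, hr0, hXr, hmin⟩ := hc
  obtain ⟨x, hx, y, hy, hxy⟩ := exists_dist_eq_diam X hfin hne
  set D := Metric.diam X with hD'
  have hD0 : 0 ≤ D := Metric.diam_nonneg
  have hlog0 : 0 ≤ Real.log 2 := Real.log_nonneg one_le_two
  have hlog1 : Real.log 2 < 0.6931471808 := Real.log_two_lt_d9
  obtain ⟨m, hmx, hmy⟩ := exists_midpoint x y
  rw [hxy] at hmx hmy
  -- distances from o and c to x, y
  have hox : dist o x ≤ R := by
    have := hXR hx; rw [Metric.mem_closedBall] at this; rwa [dist_comm]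
  have hoy : dist o y ≤ R := by
    have := hXR hy; rw [Metric.mem_closedBall] at this; rwa [dist_comm]
  have hcx : dist c x ≤ r := by
    have := hXr hx; rw [Metric.mem_closedBall] at this; rwa [dist_comm]
  have hcy : dist c y ≤ r := by
    have := hXr hy; rw [Metric.mem_closedBall] at this; rwa [dist_comm]
  have hmx' : dist m x = D / 2 := by rw [dist_comm]; exact hmx
  have hmy' : dist m y = D / 2 := by rw [dist_comm]; exact hmy
  -- the ball around m of radius D/2 + 2 log 2 covers X
  have hcover : X ⊆ Metric.closedBall m (D / 2 + 2 * Real.log 2) := by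
    intro z hz
    rw [Metric.mem_closedBall]
    have h4 := four_point z m x y
    have dzx : dist z x ≤ D := Metric.dist_le_diam_of_mem hfin.isBounded hz hx
    have dzy : dist z y ≤ D := Metric.dist_le_diam_of_mem hfin.isBounded hz hy
    rw [hxy, hmx', hmy'] at h4
    rcases max_le_iff.1 (le_refl (max (dist z x + D / 2) (dist z y + D / 2))) with _
    have hmax : max (dist z x + D / 2) (dist z y + D / 2) ≤ D + D / 2 :=
      max_le (by linarith) (by linarith)
    linarith
  -- the barycenter radius is small
  have hrD : r ≤ D / 2 + 2 * Real.log 2 :=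
    hmin m _ (by positivity) hcover
  -- lower bound
  have hlow : R - D / 2 - 5 ≤ dist o c := by
    have ht : dist o p' ≤ dist o c + dist c p' := dist_triangle o c p'
    have hcp : dist c p' ≤ r := by
      have := hXr hp'; rw [Metric.mem_closedBall] at this; rwa [dist_comm]
    rw [hdist] at ht
    linarith
  -- upper bound
  have h5 := four_point o m x y
  rw [hxy, hmx', hmy'] at h5
  have hom : dist o m ≤ R - D / 2 + 2 * Real.log 2 := by
    have hmax : max (dist o x + D / 2) (dist o y + D / 2) ≤ R + D / 2 :=
      max_le (by linarith) (by linarith)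
    linarith
  have h6 := four_point c m x y
  rw [hxy, hmx', hmy'] at h6
  have hcm : dist c m ≤ r - D / 2 + 2 * Real.log 2 := by
    have hmax : max (dist c x + D / 2) (dist c y + D / 2) ≤ r + D / 2 :=
      max_le (by linarith) (by linarith)
    linarith
  have hup : dist o c ≤ R - D / 2 + 15 := by
    have ht : dist o c ≤ dist o m + dist m c := dist_triangle o m c
    have : dist m c = dist c m := dist_comm m c
    linarith
  exact ⟨hlow, hup⟩

end
end

section
/- Let X be a nonempty finite subset of the hyperbolic plane ℍ with diam(X) > 0, let o ∈ ℍ and R ≥ 0 be such that X ⊆ closedBall(o, R) and some point p' ∈ X satisfies dist(o, p') = R (so closedBall(o, R) is the smallest ball centered at o containing X). Then diam(X ∩ closedBall(o, R − 25)) < diam(X). -/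
set_option maxHeartbeats 800000


open scoped UpperHalfPlane

open Real

/-- Ptolemy's inequality in the complex plane. -/
lemma ptolemyC (x y o p : ℂ) :
    dist x y * dist o p ≤ dist x p * dist o y + dist o x * dist p y := by
  simp only [Complex.dist_eq]
  have h : (x - y) * (o - p) = (x - p) * (o - y) + (o - x) * (p - y) := by ring
  calc ‖x - y‖ * ‖o - p‖
      = ‖(x - y) * (o - p)‖ := (norm_mul _ _).symm
    _ = ‖(x - p) * (o - y) + (o - x) * (p - y)‖ := by rw [h]
    _ ≤ ‖(x - p) * (o - y)‖ + ‖(o - x) * (p - y)‖ :=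
        norm_add_le _ _
    _ = _ := by rw [norm_mul, norm_mul]

/-- Hyperbolic Ptolemy inequality in the upper half-plane. -/
lemma hyp_ptolemy (x y o p : ℍ) :
    Real.sinh (dist x y / 2) * Real.sinh (dist o p / 2) ≤
      Real.sinh (dist x p / 2) * Real.sinh (dist o y / 2) +
      Real.sinh (dist o x / 2) * Real.sinh (dist p y / 2) := by
  have hx := x.im_pos
  have hy := y.im_pos
  have ho := o.im_pos
  have hp := p.im_pos
  rw [UpperHalfPlane.sinh_half_dist, UpperHalfPlane.sinh_half_dist,
    UpperHalfPlane.sinh_half_dist, UpperHalfPlane.sinh_half_dist,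
    UpperHalfPlane.sinh_half_dist, UpperHalfPlane.sinh_half_dist]
  rw [div_mul_div_comm, div_mul_div_comm, div_mul_div_comm]
  have e1 : (2 * Real.sqrt (x.im * y.im)) * (2 * Real.sqrt (o.im * p.im))
      = 4 * (Real.sqrt x.im * Real.sqrt y.im * Real.sqrt o.im * Real.sqrt p.im) := by
    rw [Real.sqrt_mul hx.le, Real.sqrt_mul ho.le]; ring
  have e2 : (2 * Real.sqrt (x.im * p.im)) * (2 * Real.sqrt (o.im * y.im))
      = 4 * (Real.sqrt x.im * Real.sqrt y.im * Real.sqrt o.im * Real.sqrt p.im) := by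
    rw [Real.sqrt_mul hx.le, Real.sqrt_mul ho.le]; ring
  have e3 : (2 * Real.sqrt (o.im * x.im)) * (2 * Real.sqrt (p.im * y.im))
      = 4 * (Real.sqrt x.im * Real.sqrt y.im * Real.sqrt o.im * Real.sqrt p.im) := by
    rw [Real.sqrt_mul ho.le, Real.sqrt_mul hp.le]; ring
  rw [e1, e2, e3, ← add_div, div_le_div_iff_of_pos_right]
  · exact ptolemyC x y o p
  · have : (0:ℝ) < Real.sqrt x.im := Real.sqrt_pos.2 hx
    have : (0:ℝ) < Real.sqrt y.im := Real.sqrt_pos.2 hy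
    have : (0:ℝ) < Real.sqrt o.im := Real.sqrt_pos.2 ho
    have : (0:ℝ) < Real.sqrt p.im := Real.sqrt_pos.2 hp
    positivity

lemma sinh_le_half_exp (t : ℝ) : Real.sinh t ≤ Real.exp t / 2 := by
  rw [Real.sinh_eq]
  have := Real.exp_pos (-t)
  linarith

lemma quarter_exp_le_sinh {t : ℝ} (ht : 1 ≤ t) : Real.exp t / 4 ≤ Real.sinh t := by
  rw [Real.sinh_eq]
  have h1 : Real.exp t * Real.exp (-t) = 1 := by rw [← Real.exp_add]; simp
  have h2 : 2 ≤ Real.exp t := by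
    have := Real.add_one_le_exp t
    linarith
  nlinarith [Real.exp_pos (-t)]

/-- Extremal cancellation: removing the points of `X` within `25` of the boundary of the
smallest enclosing `o`-centered ball strictly decreases the diameter. -/
theorem extremal_cancellation (X : Set ℍ) (hfin : X.Finite) (hne : X.Nonempty)
    (hdiam : 0 < Metric.diam X)
    (o : ℍ) (R : ℝ) (hR : 0 ≤ R) (hXR : X ⊆ Metric.closedBall o R)
    (p' : ℍ) (hp' : p' ∈ X) (hdist : dist o p' = R) :
    Metric.diam (X ∩ Metric.closedBall o (R - 25)) < Metric.diam X := by
  rcases (X ∩ Metric.closedBall o (R - 25)).eq_empty_or_nonempty with hY | hY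
  · rw [hY, Metric.diam_empty]; exact hdiam
  obtain ⟨q, hqX, hqB⟩ := hY
  have hbd : Bornology.IsBounded X := hfin.isBounded
  have hq : dist q o ≤ R - 25 := Metric.mem_closedBall.1 hqB
  have h25 : 25 ≤ Metric.diam X := by
    have h1 : dist q p' ≤ Metric.diam X := Metric.dist_le_diam_of_mem hbd hqX hp'
    have h2 : dist o p' ≤ dist o q + dist q p' := dist_triangle _ _ _
    rw [dist_comm o q] at h2
    linarith [hdist ▸ h2]
  have key : ∀ x ∈ X ∩ Metric.closedBall o (R - 25),
      ∀ y ∈ X ∩ Metric.closedBall o (R - 25), dist x y ≤ Metric.diam X - 1 := by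
    rintro x ⟨hxX, hxB⟩ y ⟨hyX, hyB⟩
    have hx : dist x o ≤ R - 25 := Metric.mem_closedBall.1 hxB
    have hy : dist y o ≤ R - 25 := Metric.mem_closedBall.1 hyB
    by_cases hsmall : dist x y ≤ 2
    · linarith
    push_neg at hsmall
    have hRge : 25 ≤ R := by have := dist_nonneg (x := x) (y := o); linarith
    have hpt := hyp_ptolemy x y o p'
    -- lower bounds
    have hA : Real.exp (dist x y / 2) / 4 ≤ Real.sinh (dist x y / 2) :=
      quarter_exp_le_sinh (by linarith)
    have hB : Real.exp (dist o p' / 2) / 4 ≤ Real.sinh (dist o p' / 2) :=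
      quarter_exp_le_sinh (by rw [hdist]; linarith)
    -- sinh nonneg
    have s1 : (0:ℝ) ≤ Real.sinh (dist x p' / 2) := (Real.sinh_nonneg_iff.2 (by positivity))
    have s2 : (0:ℝ) ≤ Real.sinh (dist o y / 2) := (Real.sinh_nonneg_iff.2 (by positivity))
    have s3 : (0:ℝ) ≤ Real.sinh (dist o x / 2) := (Real.sinh_nonneg_iff.2 (by positivity))
    have s4 : (0:ℝ) ≤ Real.sinh (dist p' y / 2) := (Real.sinh_nonneg_iff.2 (by positivity))
    -- upper bounds for RHS terms
    have d1 : dist x p' ≤ Metric.diam X := Metric.dist_le_diam_of_mem hbd hxX hp'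
    have d2 : dist o y ≤ R - 25 := by rw [dist_comm]; exact hy
    have d3 : dist o x ≤ R - 25 := by rw [dist_comm]; exact hx
    have d4 : dist p' y ≤ Metric.diam X := Metric.dist_le_diam_of_mem hbd hp' hyX
    have u1 : Real.sinh (dist x p' / 2) ≤ Real.exp (Metric.diam X / 2) / 2 :=
      (sinh_le_half_exp _).trans (by gcongr)
    have u2 : Real.sinh (dist o y / 2) ≤ Real.exp ((R - 25) / 2) / 2 :=
      (sinh_le_half_exp _).trans (by gcongr)
    have u3 : Real.sinh (dist o x / 2) ≤ Real.exp ((R - 25) / 2) / 2 :=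
      (sinh_le_half_exp _).trans (by gcongr)
    have u4 : Real.sinh (dist p' y / 2) ≤ Real.exp (Metric.diam X / 2) / 2 :=
      (sinh_le_half_exp _).trans (by gcongr)
    have lhs : Real.exp (dist x y / 2) / 4 * (Real.exp (dist o p' / 2) / 4) ≤
        Real.sinh (dist x y / 2) * Real.sinh (dist o p' / 2) := by
      apply mul_le_mul hA hB (by positivity)
      exact (Real.sinh_nonneg_iff.2 (by positivity))
    have rhs : Real.sinh (dist x p' / 2) * Real.sinh (dist o y / 2) +
        Real.sinh (dist o x / 2) * Real.sinh (dist p' y / 2) ≤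
        Real.exp (Metric.diam X / 2) / 2 * (Real.exp ((R - 25) / 2) / 2) +
        Real.exp ((R - 25) / 2) / 2 * (Real.exp (Metric.diam X / 2) / 2) := by
      exact add_le_add (mul_le_mul u1 u2 s2 (by positivity))
        (mul_le_mul u3 u4 s4 (by positivity))
    have H : Real.exp (dist x y / 2) * Real.exp (dist o p' / 2) ≤
        8 * (Real.exp (Metric.diam X / 2) * Real.exp ((R - 25) / 2)) := by
      nlinarith [lhs.trans (hpt.trans rhs)]
    rw [← Real.exp_add, ← Real.exp_add, hdist] at H
    have hlog8 : Real.log 8 = 3 * Real.log 2 := by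
      rw [show (8:ℝ) = 2 ^ 3 by norm_num, Real.log_pow]
      push_cast; ring
    have h8 : (8:ℝ) * Real.exp (Metric.diam X / 2 + (R - 25) / 2) =
        Real.exp (Real.log 8 + (Metric.diam X / 2 + (R - 25) / 2)) := by
      rw [Real.exp_add (Real.log 8), Real.exp_log (by norm_num : (0:ℝ) < 8)]
    rw [h8] at H
    have H3 := Real.exp_le_exp.1 H
    have hlog2 := Real.log_two_lt_d9
    linarith
  have hle : Metric.diam (X ∩ Metric.closedBall o (R - 25)) ≤ Metric.diam X - 1 :=
    Metric.diam_le_of_forall_dist_le (by linarith) key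
  linarith
end
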